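/- Let G be a group acting by homeomorphisms on a topological space V such that every orbit G·v is locally closed in V. Then the orbit space V/G, equipped with the quotient topology, is a T0 topological space. -/
import Mathlib

open MulAction Set

/-- If a group `G` acts by homeomorphisms on a topological space `V` with all orbits locally
closed, then the orbit space `V/G` with the quotient topology is T0. -/
theorem orbit_space_t0_of_locally_closed_orbits
    (G : Type*) [Group G]
    (V : Type*) [TopologicalSpace V] [MulAction G V]
    (hcont : ∀ g : G, Continuous fun v : V => g • v)
    (horb : ∀ v : V, IsLocallyClosed (MulAction.orbit G v)) :
    T0Space (Quotient (MulAction.orbitRel G V)) := by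
  -- closures of orbits are saturated
  have hsat : ∀ (x : V) (g : G) (z : V), z ∈ closure (orbit G x) →
      g • z ∈ closure (orbit G x) := by
    intro x g z hz
    have hcl : IsClosed ((fun v : V => g • v) ⁻¹' closure (orbit G x)) :=
      isClosed_closure.preimage (hcont g)
    have hsub : orbit G x ⊆ (fun v : V => g • v) ⁻¹' closure (orbit G x) := by
      rintro w ⟨h, rfl⟩
      exact subset_closure ⟨g * h, by simp [mul_smul]⟩
    exact closure_minimal hsub hcl hz
  -- key: specialization in the quotient gives membership in orbit closure
  have key : ∀ x y : V,
      (Quotient.mk (orbitRel G V) y) ∈ closure {Quotient.mk (orbitRel G V) x} →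
      y ∈ closure (orbit G x) := by
    intro x y hy
    have hC : IsClosed (Quotient.mk (orbitRel G V) '' closure (orbit G x)) := by
      rw [← isQuotientMap_quotient_mk'.isClosed_preimage]
      show IsClosed (Quotient.mk (orbitRel G V) ⁻¹' _)
      have heq : Quotient.mk (orbitRel G V) ⁻¹'
          (Quotient.mk (orbitRel G V) '' closure (orbit G x)) = closure (orbit G x) := by
        ext v
        constructor
        · rintro ⟨z, hz, hzv⟩
          have hrel : z ∈ orbit G v := Quotient.exact hzv
          obtain ⟨g, hg⟩ := hrel
          have : v = g⁻¹ • z := by rw [← hg, inv_smul_smul]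
          rw [this]
          exact hsat x g⁻¹ z hz
        · exact fun hv => ⟨v, hv, rfl⟩
      rw [heq]; exact isClosed_closure
    have hxC : Quotient.mk (orbitRel G V) x ∈
        Quotient.mk (orbitRel G V) '' closure (orbit G x) :=
      ⟨x, subset_closure (mem_orbit_self x), rfl⟩
    obtain ⟨z, hz, hzy⟩ :=
      closure_minimal (singleton_subset_iff.mpr hxC) hC hy
    have hrel : z ∈ orbit G y := Quotient.exact hzy
    obtain ⟨g, hg⟩ := hrel
    have : y = g⁻¹ • z := by rw [← hg, inv_smul_smul]
    rw [this]
    exact hsat x g⁻¹ z hz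
  refine t0Space_iff_inseparable _ |>.mpr ?_
  intro a b hab
  induction a using Quotient.ind with | _ x =>
  induction b using Quotient.ind with | _ y =>
  have hyx : y ∈ closure (orbit G x) := key x y
    (specializes_iff_mem_closure.mp hab.specializes)
  have hxy : x ∈ closure (orbit G y) := key y x
    (specializes_iff_mem_closure.mp hab.specializes')
  -- show y ∈ orbit G x
  by_cases hyo : y ∈ orbit G x
  · exact Quotient.sound (Setoid.symm' _ hyo)
  · exfalso
    have hopen : IsOpen (coborder (orbit G x)) :=
      isLocallyClosed_iff_isOpen_coborder.mp (horb x)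
    have hclosed : IsClosed (closure (orbit G x) \ orbit G x) := by
      have : closure (orbit G x) \ orbit G x = (coborder (orbit G x))ᶜ := by
        rw [coborder, compl_compl]
      rw [this]
      exact hopen.isClosed_compl
    have hsub : orbit G y ⊆ closure (orbit G x) \ orbit G x := by
      rintro w ⟨g, rfl⟩
      refine ⟨hsat x g y hyx, fun hw => hyo ?_⟩
      obtain ⟨h, hh⟩ := hw
      dsimp only at hh
      exact ⟨g⁻¹ * h, by show (g⁻¹ * h) • x = y; rw [mul_smul, hh, inv_smul_smul]⟩
    have := closure_minimal hsub hclosed hxy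
    exact this.2 (mem_orbit_self x)
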